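/- There exists D > 0 such that for every real d ≥ D one has the inequality ∫_{arsinh d}^{(3/2)·log d} (sinh x)² / √((sinh x)² − d²) dx < cosh((3/2)·log d) − 1, where the integral is the Lebesgue integral over the interval (arsinh d, (3/2)·log d]. -/

import Mathlib

open Real MeasureTheory

set_option maxHeartbeats 400000 in
theorem catenoid_slice_area_lt_disks :
    ∃ D : ℝ, 0 < D ∧ ∀ d : ℝ, D ≤ d →
      (∫ x in Set.Ioc (Real.arsinh d) ((3/2) * Real.log d),
          (Real.sinh x) ^ 2 / Real.sqrt ((Real.sinh x) ^ 2 - d ^ 2))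
        < Real.cosh ((3/2) * Real.log d) - 1 := by
  refine ⟨9, by norm_num, fun d hd => ?_⟩
  have hd1 : (1:ℝ) < d := by linarith
  have hd0 : (0:ℝ) < d := by linarith
  set a := Real.arsinh d with ha
  set ρ := (3/2) * Real.log d with hρ
  set f : ℝ → ℝ := fun x => (Real.sinh x) ^ 2 / Real.sqrt ((Real.sinh x) ^ 2 - d ^ 2)
    with hf
  -- exponential of ρ
  set E : ℝ := d ^ ((3:ℝ)/2) with hE
  have hexp : Real.exp ρ = E := by
    rw [hE, Real.rpow_def_of_pos hd0, hρ, mul_comm]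
  have hE1 : (1:ℝ) ≤ E := Real.one_le_rpow hd1.le (by norm_num)
  have hE3d : 3 * d ≤ E := by
    have h1 : E = d ^ (1:ℝ) * d ^ ((1:ℝ)/2) := by
      rw [hE, ← Real.rpow_add hd0]; norm_num
    have h2 : (3:ℝ) ≤ d ^ ((1:ℝ)/2) := by
      have : (9:ℝ) ^ ((1:ℝ)/2) ≤ d ^ ((1:ℝ)/2) :=
        Real.rpow_le_rpow (by norm_num) hd (by norm_num)
      have h9 : (9:ℝ) ^ ((1:ℝ)/2) = 3 := by
        rw [show (9:ℝ) = 3 ^ (2:ℕ) by norm_num, ← Real.rpow_natCast,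
          ← Real.rpow_mul (by norm_num)]
        norm_num
      linarith
    rw [h1, Real.rpow_one]
    nlinarith
  have hEd2 : E ≤ d ^ 2 := by
    have : d ^ ((3:ℝ)/2) ≤ d ^ (2:ℝ) :=
      Real.rpow_le_rpow_of_exponent_le hd1.le (by norm_num)
    rw [← Real.rpow_natCast d 2]; push_cast; exact this
  have hEinv : E⁻¹ ≤ 1 := inv_le_one_of_one_le₀ hE1
  have hEinv0 : 0 < E⁻¹ := inv_pos.mpr (by linarith)
  have hsinhρ : Real.sinh ρ = (E - E⁻¹) / 2 := by
    rw [Real.sinh_eq, hexp, Real.exp_neg, hexp]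
  have hcoshρ : Real.cosh ρ = (E + E⁻¹) / 2 := by
    rw [Real.cosh_eq, hexp, Real.exp_neg, hexp]
  -- a < ρ
  have hdρ : d < Real.sinh ρ := by rw [hsinhρ]; nlinarith
  have haρ : a < ρ := by
    rw [ha, ← Real.arsinh_sinh ρ]
    exact Real.arsinh_lt_arsinh.mpr hdρ
  -- key positivity on (a, ρ]
  have hgt : ∀ x : ℝ, a < x → d < Real.sinh x := fun x hx => by
    have := Real.sinh_lt_sinh.mpr hx
    rwa [ha, Real.sinh_arsinh] at this
  have hpos : ∀ x : ℝ, a < x → 0 < Real.sinh x ^ 2 - d ^ 2 := fun x hx => by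
    have := hgt x hx; nlinarith
  -- the bound B
  set B : ℝ := Real.sqrt (Real.sinh ρ ^ 2 - d ^ 2) with hB
  -- final strict inequality B < cosh ρ - 1
  have hcosh1 : 1 < Real.cosh ρ := by
    rw [hcoshρ]; nlinarith
  have hBlt : B < Real.cosh ρ - 1 := by
    rw [hB, Real.sqrt_lt' (by linarith)]
    have hsq : Real.cosh ρ ^ 2 = 1 + Real.sinh ρ ^ 2 := Real.cosh_sq' ρ
    have h2c : 2 * Real.cosh ρ < d ^ 2 + 2 := by rw [hcoshρ]; nlinarith
    nlinarith
  -- main estimate: the integral is at most B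
  have hmain : (∫ x in Set.Ioc a ρ, f x) ≤ B := by
    by_cases hint : IntegrableOn f (Set.Ioc a ρ) volume
    · -- bound on each Ioc s ρ with a < s ≤ ρ
      have key : ∀ s : ℝ, a < s → s ≤ ρ → (∫ x in Set.Ioc s ρ, f x) ≤ B := by
        intro s hs hsρ
        set F : ℝ → ℝ := fun x => Real.sqrt (Real.sinh x ^ 2 - d ^ 2) with hF
        set g : ℝ → ℝ := fun x =>
          Real.sinh x * Real.cosh x / Real.sqrt (Real.sinh x ^ 2 - d ^ 2) with hg
        have hmem : ∀ x ∈ Set.uIcc s ρ, a < x := by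
          intro x hx
          rw [Set.uIcc_of_le hsρ] at hx
          exact lt_of_lt_of_le hs hx.1
        have hderiv : ∀ x ∈ Set.uIcc s ρ, HasDerivAt F (g x) x := by
          intro x hx
          have hx' := hpos x (hmem x hx)
          have h1 : HasDerivAt (fun y => Real.sinh y ^ 2 - d ^ 2)
              (2 * Real.sinh x ^ 1 * Real.cosh x) x := by
            simpa using (((Real.hasDerivAt_sinh x).pow 2).sub_const (d ^ 2))
          have h2 := h1.sqrt hx'.ne'
          have hs0 : (0:ℝ) < Real.sqrt (Real.sinh x ^ 2 - d ^ 2) :=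
            Real.sqrt_pos.mpr hx'
          convert h2 using 1
          rw [hg]
          field_simp
        have hcontden : ∀ x ∈ Set.uIcc s ρ,
            Real.sqrt (Real.sinh x ^ 2 - d ^ 2) ≠ 0 := by
          intro x hx
          exact (Real.sqrt_pos.mpr (hpos x (hmem x hx))).ne'
        have hcont : ContinuousOn (fun x => Real.sqrt (Real.sinh x ^ 2 - d ^ 2))
            (Set.uIcc s ρ) :=
          (Real.continuous_sinh.pow 2).continuousOn.sub continuousOn_const
            |>.sqrt
        have hgint : IntervalIntegrable g volume s ρ := by
          apply ContinuousOn.intervalIntegrable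
          exact ((Real.continuous_sinh.continuousOn.mul
            Real.continuous_cosh.continuousOn).div hcont hcontden)
        have hfint : IntervalIntegrable f volume s ρ := by
          apply ContinuousOn.intervalIntegrable
          exact ((Real.continuous_sinh.pow 2).continuousOn.div hcont hcontden)
        have hFTC : (∫ x in s..ρ, g x) = F ρ - F s :=
          intervalIntegral.integral_eq_sub_of_hasDerivAt hderiv hgint
        have hmono : (∫ x in s..ρ, f x) ≤ ∫ x in s..ρ, g x := by
          apply intervalIntegral.integral_mono_on hsρ hfint hgint
          intro x hx
          have hax : a < x := lt_of_lt_of_le hs hx.1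
          have hsx := hgt x hax
          have hsinh0 : 0 < Real.sinh x := lt_trans hd0 hsx
          have hslc : Real.sinh x < Real.cosh x := Real.sinh_lt_cosh x
          have hs0 : (0:ℝ) < Real.sqrt (Real.sinh x ^ 2 - d ^ 2) :=
            Real.sqrt_pos.mpr (hpos x hax)
          simp only [hf, hg]
          exact (div_le_div_iff_of_pos_right hs0).mpr (by nlinarith)
        have hFs : 0 ≤ F s := Real.sqrt_nonneg _
        calc (∫ x in Set.Ioc s ρ, f x) = ∫ x in s..ρ, f x := by
              rw [intervalIntegral.integral_of_le hsρ]
          _ ≤ ∫ x in s..ρ, g x := hmono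
          _ = F ρ - F s := hFTC
          _ ≤ F ρ := by linarith
          _ = B := rfl
      -- limit argument
      set u : ℕ → Set ℝ := fun n => Set.Ioc (a + (ρ - a) / (n + 1)) ρ with hu
      have humem : ∀ n : ℕ, a < a + (ρ - a) / (n + 1) ∧ a + (ρ - a) / (n + 1) ≤ ρ := by
        intro n
        have hn : (0:ℝ) < n + 1 := by positivity
        constructor
        · have : 0 < (ρ - a) / (n + 1) := div_pos (by linarith) hn
          linarith
        · have h1 : (ρ - a) / (n + 1) ≤ (ρ - a) / 1 := by
            apply div_le_div_of_nonneg_left (by linarith) one_pos (by linarith)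
          simp at h1
          linarith
      have hunion : (⋃ n, u n) = Set.Ioc a ρ := by
        ext x
        simp only [hu, Set.mem_iUnion, Set.mem_Ioc]
        constructor
        · rintro ⟨n, h1, h2⟩
          exact ⟨lt_of_lt_of_le (humem n).1 h1.le, h2⟩
        · rintro ⟨h1, h2⟩
          obtain ⟨n, hn⟩ := exists_nat_gt ((ρ - a) / (x - a))
          refine ⟨n, ?_, h2⟩
          have hxa : 0 < x - a := by linarith
          have : (ρ - a) < (n + 1) * (x - a) := by
            rw [div_lt_iff₀ hxa] at hn
            nlinarith
          have hn1 : (0:ℝ) < (n:ℝ) + 1 := by positivity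
          have : (ρ - a) / (n + 1) < x - a := by
            rw [div_lt_iff₀ hn1]; nlinarith
          linarith
      have hmonou : Monotone u := by
        intro m n hmn
        apply Set.Ioc_subset_Ioc_left
        apply add_le_add_right
        apply div_le_div_of_nonneg_left (by linarith) (by positivity)
        have : (m:ℝ) ≤ n := Nat.cast_le.mpr hmn
        linarith
      have hintU : IntegrableOn f (⋃ n, u n) volume := by
        rw [hunion]; exact hint
      have htend := tendsto_setIntegral_of_monotone
        (fun n => measurableSet_Ioc) hmonou hintU
      rw [hunion] at htend
      refine le_of_tendsto htend (Filter.Eventually.of_forall fun n => ?_)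
      exact key _ (humem n).1 (humem n).2
    · rw [integral_undef hint]
      exact Real.sqrt_nonneg _
  exact lt_of_le_of_lt hmain hBlt
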